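/- Let q > 0, α ∈ [0,1], n ≥ k ≥ 1. Then the (α,q)-Bernstein operator applied to t^k satisfies T_{n,q,α}(t^k; x) = Σ_{r=0}^{k} a(r,k) x^r, where a(r,k) = (q^{r(r-1)/2}[n-2]_q!/([n]_q^k [n-r]_q!)) · {(1-α)[n-r]_q([n+r-1]_q S_q(k+1,r+1) - [r+1]_q[n-1]_q S_q(k,r+1)) + α[n]_q[n-1]_q S_q(k,r)}. -/

import Mathlib

open Finset Filter Topology

/-- The q-integer `[m]_q = 1 + q + ... + q^{m-1}`, with `[0]_q = 0`. -/
noncomputable def qInt (q : ℝ) (m : ℕ) : ℝ := ∑ i ∈ Finset.range m, q ^ i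

/-- The q-factorial `[n]_q! = [1]_q [2]_q ⋯ [n]_q`. -/
noncomputable def qFact (q : ℝ) (n : ℕ) : ℝ := ∏ i ∈ Finset.range n, qInt q (i + 1)

/-- The q-binomial coefficient `[n]_q!/([k]_q! [n-k]_q!)` (zero if `k > n`). -/
noncomputable def qBinom (q : ℝ) (n k : ℕ) : ℝ :=
  if k ≤ n then qFact q n / (qFact q k * qFact q (n - k)) else 0

/-- The q-Stirling number of the second kind. -/
noncomputable def qStirling (q : ℝ) (k r : ℕ) : ℝ :=
  (1 / (qFact q r * q ^ (r * (r - 1) / 2))) *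
    ∑ i ∈ Finset.range (r + 1),
      (-1 : ℝ) ^ i * q ^ (i * (i - 1) / 2) * qBinom q r i * (qInt q (r - i)) ^ k

/-- The q-forward difference operator on sequences:
`Δ_q^0 f_i = f_i`, `Δ_q^{r+1} f_i = Δ_q^r f_{i+1} - q^r Δ_q^r f_i`. -/
noncomputable def qDiff (q : ℝ) : ℕ → (ℕ → ℝ) → ℕ → ℝ
  | 0, f, i => f i
  | r + 1, f, i => qDiff q r f (i + 1) - q ^ r * qDiff q r f i

/-- The eigenvalues `λ_{k,q}^{(α,n)}` of the (α,q)-Bernstein operator. -/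
noncomputable def lamEig (q α : ℝ) (n k : ℕ) : ℝ :=
  q ^ (k * (k - 1) / 2) * qFact q (n - 2) / (qFact q (n - k) * (qInt q n) ^ k) *
    ((1 - α) * qInt q (n - k) * qInt q (n - 1 + k) + α * qInt q n * qInt q (n - 1))

/-- The coefficients `a_{n,q}(r,k)` of `T_{n,q,α}(t^k; x) = Σ_r a_{n,q}(r,k) x^r`. -/
noncomputable def aCoef (q α : ℝ) (n r k : ℕ) : ℝ :=
  q ^ (r * (r - 1) / 2) * qFact q (n - 2) / ((qInt q n) ^ k * qFact q (n - r)) *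
    ((1 - α) * qInt q (n - r) *
        (qInt q (n + r - 1) * qStirling q (k + 1) (r + 1) -
          qInt q (r + 1) * qInt q (n - 1) * qStirling q k (r + 1)) +
      α * qInt q n * qInt q (n - 1) * qStirling q k r)

/-- The (α,q)-Bernstein operator, via its forward-difference representation
`T_{n,q,α}(f;x) = Σ_{r=0}^n ((1-α) C_q(n-1,r) Δ_q^r g_0 + α C_q(n,r) Δ_q^r f_0) x^r`,
where `f_i = f([i]_q/[n]_q)` and
`g_i = (1 - q^{n-i-1}[i]_q/[n-1]_q) f_i + (q^{n-i-1}[i]_q/[n-1]_q) f_{i+1}`. -/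
noncomputable def Talpha (q α : ℝ) (n : ℕ) (f : ℝ → ℝ) (x : ℝ) : ℝ :=
  let fs : ℕ → ℝ := fun i => f (qInt q i / qInt q n)
  let gs : ℕ → ℝ := fun i =>
    (1 - q ^ (n - i - 1) * qInt q i / qInt q (n - 1)) * fs i +
      (q ^ (n - i - 1) * qInt q i / qInt q (n - 1)) * fs (i + 1)
  ∑ r ∈ Finset.range (n + 1),
    ((1 - α) * qBinom q (n - 1) r * qDiff q r gs 0 + α * qBinom q n r * qDiff q r fs 0) * x ^ r

section AuxLemmas

variable {q : ℝ}

lemma qInt_zero (q : ℝ) : qInt q 0 = 0 := by simp [qInt]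

lemma qInt_one (q : ℝ) : qInt q 1 = 1 := by simp [qInt]

lemma qInt_add (q : ℝ) (a b : ℕ) : qInt q (a + b) = qInt q a + q ^ a * qInt q b := by
  rw [qInt, qInt, qInt, Finset.sum_range_add, Finset.mul_sum]
  congr 1
  exact Finset.sum_congr rfl fun i _ => (pow_add q a i)

lemma qInt_succ (q : ℝ) (m : ℕ) : qInt q (m + 1) = 1 + q * qInt q m := by
  have h := qInt_add q 1 m
  rw [Nat.add_comm 1 m] at h
  simpa [qInt_one] using h

lemma qInt_pos (hq : 0 < q) {m : ℕ} (hm : 1 ≤ m) : 0 < qInt q m :=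
  Finset.sum_pos (fun i _ => pow_pos hq i) (by rw [Finset.nonempty_range_iff]; omega)

lemma qFact_pos (hq : 0 < q) (n : ℕ) : 0 < qFact q n :=
  Finset.prod_pos fun i _ => qInt_pos hq (by omega)

lemma qFact_zero (q : ℝ) : qFact q 0 = 1 := by simp [qFact]

lemma qFact_succ (q : ℝ) (n : ℕ) : qFact q (n + 1) = qFact q n * qInt q (n + 1) :=
  Finset.prod_range_succ _ _

lemma qBinom_zero (hq : 0 < q) (n : ℕ) : qBinom q n 0 = 1 := by
  rw [qBinom, if_pos (Nat.zero_le n)]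
  rw [qFact_zero, one_mul, Nat.sub_zero, div_self (qFact_pos hq n).ne']

lemma qBinom_self (hq : 0 < q) (n : ℕ) : qBinom q n n = 1 := by
  rw [qBinom, if_pos le_rfl, Nat.sub_self, qFact_zero, mul_one,
    div_self (qFact_pos hq n).ne']

lemma qBinom_of_gt {n k : ℕ} (h : n < k) : qBinom q n k = 0 := by
  rw [qBinom, if_neg (by omega)]

lemma qPascal (hq : 0 < q) (r j : ℕ) :
    qBinom q (r + 1) (j + 1) = qBinom q r (j + 1) + q ^ (r - j) * qBinom q r j := by
  rcases lt_trichotomy j r with h | h | h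
  · obtain ⟨s, rfl⟩ : ∃ s, r = j + 1 + s := ⟨r - j - 1, by omega⟩
    rw [qBinom, if_pos (by omega), qBinom, if_pos (by omega), qBinom, if_pos (by omega)]
    have h1 : j + 1 + s + 1 - (j + 1) = s + 1 := by omega
    have h2 : j + 1 + s - (j + 1) = s := by omega
    have h3 : j + 1 + s - j = s + 1 := by omega
    rw [h1, h2, h3]
    have hint : qInt q (j + 1 + s + 1) = qInt q (s + 1) + q ^ (s + 1) * qInt q (j + 1) := by
      have := qInt_add q (s + 1) (j + 1)
      rw [show s + 1 + (j + 1) = j + 1 + s + 1 by omega] at this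
      exact this
    have e1 : qFact q (j + 1 + s + 1) = qFact q (j + 1 + s) * qInt q (j + 1 + s + 1) :=
      qFact_succ q _
    have e2 : qFact q (s + 1) = qFact q s * qInt q (s + 1) := qFact_succ q _
    have e3 : qFact q (j + 1) = qFact q j * qInt q (j + 1) := qFact_succ q _
    have hf1 := (qFact_pos hq (j + 1 + s)).ne'
    have hf2 := (qFact_pos hq s).ne'
    have hf3 := (qFact_pos hq j).ne'
    have hi1 := (qInt_pos hq (m := s + 1) (by omega)).ne'
    have hi2 := (qInt_pos hq (m := j + 1) (by omega)).ne'
    rw [e1, e2, e3, hint]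
    field_simp
  · subst h
    rw [qBinom_self hq, qBinom_of_gt (by omega), qBinom_self hq]
    simp
  · rw [qBinom_of_gt (by omega), qBinom_of_gt (by omega), qBinom_of_gt (by omega)]
    simp

end AuxLemmas
section AuxLemmas2

variable {q : ℝ}

lemma qDiff_zero_app (q : ℝ) (f : ℕ → ℝ) (i : ℕ) : qDiff q 0 f i = f i := rfl

lemma qDiff_succ_app (q : ℝ) (r : ℕ) (f : ℕ → ℝ) (i : ℕ) :
    qDiff q (r + 1) f i = qDiff q r f (i + 1) - q ^ r * qDiff q r f i := rfl

lemma qDiff_expand (hq : 0 < q) (f : ℕ → ℝ) :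
    ∀ (r i : ℕ), qDiff q r f i =
      ∑ j ∈ Finset.range (r + 1),
        (-1 : ℝ) ^ j * q ^ (j * (j - 1) / 2) * qBinom q r j * f (i + r - j) := by
  intro r
  induction r with
  | zero => intro i; simp [qDiff_zero_app, qBinom_zero hq]
  | succ r ih =>
    intro i
    rw [qDiff_succ_app, ih, ih]
    have key : ∀ j ∈ Finset.range (r + 1),
        (-1 : ℝ) ^ (j + 1) * q ^ ((j + 1) * (j + 1 - 1) / 2) * qBinom q (r + 1) (j + 1) *
            f (i + (r + 1) - (j + 1))
          = -((-1 : ℝ) ^ j * q ^ ((j + 1) * (j + 1 - 1) / 2) * qBinom q r (j + 1) * f (i + r - j))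
            - q ^ r * ((-1 : ℝ) ^ j * q ^ (j * (j - 1) / 2) * qBinom q r j * f (i + r - j)) := by
      intro j hj
      rw [Finset.mem_range] at hj
      have hje : j ≤ r := by omega
      have hidx : i + (r + 1) - (j + 1) = i + r - j := by omega
      rw [hidx, qPascal hq]
      have hpow : q ^ ((j + 1) * (j + 1 - 1) / 2) * q ^ (r - j) = q ^ (j * (j - 1) / 2) * q ^ r := by
        rw [← pow_add, ← pow_add, Nat.triangle_succ]
        congr 1
        omega
      have : (-1 : ℝ) ^ (j + 1) = -(-1 : ℝ) ^ j := by ring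
      rw [this]
      linear_combination (-(-1 : ℝ) ^ j * qBinom q r j * f (i + r - j)) * hpow
    -- RHS manipulation
    rw [Finset.sum_range_succ' (fun j => (-1 : ℝ) ^ j * q ^ (j * (j - 1) / 2) *
      qBinom q (r + 1) j * f (i + (r + 1) - j)) (r + 1)]
    rw [Finset.sum_congr rfl key, Finset.sum_sub_distrib]
    simp only [Finset.sum_neg_distrib]
    rw [← Finset.mul_sum]
    -- first LHS sum: peel j = 0
    rw [Finset.sum_range_succ' (fun j => (-1 : ℝ) ^ j * q ^ (j * (j - 1) / 2) *
      qBinom q r j * f (i + 1 + r - j)) r]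
    have hlast : ∑ j ∈ Finset.range (r + 1),
        (-1 : ℝ) ^ j * q ^ ((j + 1) * (j + 1 - 1) / 2) * qBinom q r (j + 1) * f (i + r - j)
        = ∑ j ∈ Finset.range r,
        (-1 : ℝ) ^ j * q ^ ((j + 1) * (j + 1 - 1) / 2) * qBinom q r (j + 1) * f (i + r - j) := by
      rw [Finset.sum_range_succ, qBinom_of_gt (by omega)]
      ring
    have hterm : ∀ j ∈ Finset.range r,
        (-1 : ℝ) ^ (j + 1) * q ^ ((j + 1) * (j + 1 - 1) / 2) * qBinom q r (j + 1) *
          f (i + 1 + r - (j + 1))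
        = -((-1 : ℝ) ^ j * q ^ ((j + 1) * (j + 1 - 1) / 2) * qBinom q r (j + 1) * f (i + r - j)) := by
      intro j hj
      have hidx : i + 1 + r - (j + 1) = i + r - j := by omega
      rw [hidx]; ring
    rw [Finset.sum_congr rfl hterm, hlast]
    simp only [pow_zero, one_mul, qBinom_zero hq, Nat.sub_zero, Nat.mul_zero, Nat.zero_div]
    have h1 : i + 1 + r = i + (r + 1) := by omega
    rw [h1, Finset.sum_neg_distrib]
    ring

lemma qDiff_smul (q c : ℝ) (f : ℕ → ℝ) :
    ∀ (r i : ℕ), qDiff q r (fun i => c * f i) i = c * qDiff q r f i := by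
  intro r
  induction r with
  | zero => intro i; rfl
  | succ r ih => intro i; rw [qDiff_succ_app, qDiff_succ_app, ih, ih]; ring

lemma qDiff_const (q c : ℝ) : ∀ (r i : ℕ), qDiff q (r + 1) (fun _ => c) i = 0 := by
  intro r
  induction r with
  | zero => intro i; simp [qDiff_succ_app, qDiff_zero_app]
  | succ r ih => intro i; rw [qDiff_succ_app, ih, ih]; ring

end AuxLemmas2
section AuxLemmas3

variable {q : ℝ}

/-- Auxiliary: the alternating sum defining the q-Stirling numbers. -/
noncomputable def Dsum (q : ℝ) (m k : ℕ) : ℝ :=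
  ∑ j ∈ Finset.range (m + 1),
    (-1 : ℝ) ^ j * q ^ (j * (j - 1) / 2) * qBinom q m j * (qInt q (m - j)) ^ k

lemma Dsum_eq_stirling (hq : 0 < q) (m k : ℕ) :
    Dsum q m k = qFact q m * q ^ (m * (m - 1) / 2) * qStirling q k m := by
  rw [qStirling, Dsum]
  have h1 : qFact q m ≠ 0 := (qFact_pos hq m).ne'
  have h2 : (q : ℝ) ^ (m * (m - 1) / 2) ≠ 0 := (pow_pos hq _).ne'
  field_simp

lemma qDiff_monomial (hq : 0 < q) (k r : ℕ) :
    qDiff q r (fun i => (qInt q i) ^ k) 0 = Dsum q r k := by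
  rw [qDiff_expand hq, Dsum]
  exact Finset.sum_congr rfl fun j hj => by rw [Nat.zero_add]

lemma qBinom_mul (hq : 0 < q) (r j : ℕ) :
    qInt q (j + 1) * qBinom q (r + 1) (j + 1) = qInt q (r + 1) * qBinom q r j := by
  rcases le_or_gt j r with h | h
  · rw [qBinom, if_pos (by omega), qBinom, if_pos h]
    have h1 : r + 1 - (j + 1) = r - j := by omega
    rw [h1, qFact_succ q r, qFact_succ q j]
    have hf1 := (qFact_pos hq r).ne'
    have hf2 := (qFact_pos hq j).ne'
    have hf3 := (qFact_pos hq (r - j)).ne'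
    have hi1 := (qInt_pos hq (m := j + 1) (by omega)).ne'
    have hi2 := (qInt_pos hq (m := r + 1) (by omega)).ne'
    field_simp
  · rw [qBinom_of_gt (by omega), qBinom_of_gt (by omega)]
    ring

lemma Dsum_rec (hq : 0 < q) (k r : ℕ) :
    Dsum q (r + 1) (k + 1)
      = qInt q (r + 1) * Dsum q (r + 1) k + q ^ r * qInt q (r + 1) * Dsum q r k := by
  have split : ∀ j ∈ Finset.range (r + 2),
      (-1 : ℝ) ^ j * q ^ (j * (j - 1) / 2) * qBinom q (r + 1) j * (qInt q (r + 1 - j)) ^ (k + 1)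
        = qInt q (r + 1) *
            ((-1 : ℝ) ^ j * q ^ (j * (j - 1) / 2) * qBinom q (r + 1) j * (qInt q (r + 1 - j)) ^ k)
          - (-1 : ℝ) ^ j * q ^ (j * (j - 1) / 2) * q ^ (r + 1 - j) * qInt q j *
              qBinom q (r + 1) j * (qInt q (r + 1 - j)) ^ k := by
    intro j hj
    rw [Finset.mem_range] at hj
    have hint : qInt q (r + 1) = qInt q (r + 1 - j) + q ^ (r + 1 - j) * qInt q j := by
      have := qInt_add q (r + 1 - j) j
      rw [show r + 1 - j + j = r + 1 by omega] at this
      exact this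
    rw [pow_succ, hint]
    ring
  have hW : ∑ j ∈ Finset.range (r + 2),
      (-1 : ℝ) ^ j * q ^ (j * (j - 1) / 2) * q ^ (r + 1 - j) * qInt q j *
        qBinom q (r + 1) j * (qInt q (r + 1 - j)) ^ k
      = -(q ^ r * qInt q (r + 1) * Dsum q r k) := by
    rw [Finset.sum_range_succ']
    simp only [qInt_zero, Nat.sub_zero]
    have hterm : ∀ j ∈ Finset.range (r + 1),
        (-1 : ℝ) ^ (j + 1) * q ^ ((j + 1) * (j + 1 - 1) / 2) * q ^ (r + 1 - (j + 1)) *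
            qInt q (j + 1) * qBinom q (r + 1) (j + 1) * (qInt q (r + 1 - (j + 1))) ^ k
          = -(q ^ r * qInt q (r + 1) *
              ((-1 : ℝ) ^ j * q ^ (j * (j - 1) / 2) * qBinom q r j * (qInt q (r - j)) ^ k)) := by
      intro j hj
      rw [Finset.mem_range] at hj
      have h1 : r + 1 - (j + 1) = r - j := by omega
      have hpow : q ^ ((j + 1) * (j + 1 - 1) / 2) * q ^ (r - j) = q ^ (j * (j - 1) / 2) * q ^ r := by
        rw [← pow_add, ← pow_add, Nat.triangle_succ]
        congr 1
        omega
      have hsign : (-1 : ℝ) ^ (j + 1) = -(-1 : ℝ) ^ j := by ring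
      rw [h1, hsign]
      linear_combination
        (-(-1 : ℝ) ^ j * q ^ ((j + 1) * (j + 1 - 1) / 2) * q ^ (r - j) * (qInt q (r - j)) ^ k) *
          qBinom_mul hq r j
        + (-(-1 : ℝ) ^ j * qInt q (r + 1) * qBinom q r j * (qInt q (r - j)) ^ k) * hpow
    rw [Finset.sum_congr rfl hterm, Finset.sum_neg_distrib, ← Finset.mul_sum, Dsum]
    ring
  rw [Dsum, Finset.sum_congr rfl split, Finset.sum_sub_distrib, hW, ← Finset.mul_sum, ← Dsum]
  ring

lemma Dsum_zero (hq : 0 < q) {m : ℕ} (hm : 1 ≤ m) : Dsum q m 0 = 0 := by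
  obtain ⟨r, rfl⟩ : ∃ r, m = r + 1 := ⟨m - 1, by omega⟩
  have h := qDiff_monomial hq 0 (r + 1)
  simp only [pow_zero] at h
  rw [← h, qDiff_const]

lemma Dsum_vanish (hq : 0 < q) : ∀ k m : ℕ, k < m → Dsum q m k = 0 := by
  intro k
  induction k with
  | zero => intro m hm; exact Dsum_zero hq (by omega)
  | succ k ih =>
    intro m hm
    obtain ⟨r, rfl⟩ : ∃ r, m = r + 1 := ⟨m - 1, by omega⟩
    rw [Dsum_rec hq, ih (r + 1) (by omega), ih r (by omega)]
    ring

lemma stirling_vanish (hq : 0 < q) {k m : ℕ} (h : k < m) : qStirling q k m = 0 := by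
  have := Dsum_eq_stirling hq m k
  rw [Dsum_vanish hq k m h] at this
  have h1 : qFact q m ≠ 0 := (qFact_pos hq m).ne'
  have h2 : (q : ℝ) ^ (m * (m - 1) / 2) ≠ 0 := (pow_pos hq _).ne'
  have h3 := this.symm
  have hne : qFact q m * q ^ (m * (m - 1) / 2) ≠ 0 := by positivity
  rcases mul_eq_zero.mp (by linear_combination h3 : qFact q m * q ^ (m * (m - 1) / 2) * qStirling q k m = 0) with h' | h'
  · exact absurd h' hne
  · exact h'

lemma stirling_rec (hq : 0 < q) (k r : ℕ) :
    qStirling q (k + 1) (r + 1) = qStirling q k r + qInt q (r + 1) * qStirling q k (r + 1) := by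
  have h := Dsum_rec hq k r
  rw [Dsum_eq_stirling hq, Dsum_eq_stirling hq, Dsum_eq_stirling hq] at h
  have e1 : qFact q (r + 1) = qFact q r * qInt q (r + 1) := qFact_succ q r
  have hpow : (q : ℝ) ^ ((r + 1) * (r + 1 - 1) / 2) = q ^ (r * (r - 1) / 2) * q ^ r := by
    rw [← pow_add, Nat.triangle_succ]
  have hf := (qFact_pos hq r).ne'
  have hp := (pow_pos hq (r * (r - 1) / 2)).ne'
  have hqr := (pow_pos hq r).ne'
  have hi := (qInt_pos hq (m := r + 1) (by omega)).ne'
  rw [e1, hpow] at h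
  have key : qFact q r * qInt q (r + 1) * (q ^ (r * (r - 1) / 2) * q ^ r) *
      (qStirling q (k + 1) (r + 1) - (qStirling q k r + qInt q (r + 1) * qStirling q k (r + 1)))
      = 0 := by linear_combination h
  have hne : qFact q r * qInt q (r + 1) * (q ^ (r * (r - 1) / 2) * q ^ r) ≠ 0 := by
    positivity
  have := mul_eq_zero.mp key
  rcases this with h' | h'
  · exact absurd h' hne
  · linarith
end AuxLemmas3
section AuxLemmas4

variable {q : ℝ}

lemma g_formula (hq : 0 < q) {n : ℕ} (hn : 2 ≤ n) (f g : ℕ → ℝ)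
    (hg : ∀ j, g j = (1 - q ^ (n - j - 1) * qInt q j / qInt q (n - 1)) * f j +
      (q ^ (n - j - 1) * qInt q j / qInt q (n - 1)) * f (j + 1)) :
    ∀ r i, r + i + 1 ≤ n →
      qInt q (n - 1) * qDiff q r g i
        = (qInt q (n - 1) - q ^ (n - i - 1) * qInt q i) * qDiff q r f i
          + q ^ (n - i - 1 - r) * qInt q (i + r) * qDiff q r f (i + 1) := by
  intro r
  induction r with
  | zero =>
    intro i hi
    rw [qDiff_zero_app, qDiff_zero_app, qDiff_zero_app, hg i, Nat.sub_zero, Nat.add_zero]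
    have hN1 : qInt q (n - 1) ≠ 0 := (qInt_pos hq (m := n - 1) (by omega)).ne'
    field_simp
    simp only [Nat.add_zero]
    ring
  | succ r ih =>
    intro i hi
    have ih1 := ih (i + 1) (by omega)
    have ih0 := ih i (by omega)
    rw [qDiff_succ_app, qDiff_succ_app, qDiff_succ_app]
    -- exponent normalization: let m := n - i - 2
    have e1 : n - (i + 1) - 1 = n - i - 2 := by omega
    have e3 : n - i - 1 = (n - i - 2) + 1 := by omega
    have e4 : n - i - 1 - r = (n - i - 2 - r) + 1 := by omega
    have e5 : n - i - 1 - (r + 1) = n - i - 2 - r := by omega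
    rw [e1] at ih1
    rw [e4] at ih0
    rw [e5]
    rw [e3] at ih0 ⊢
    have hsp : (q : ℝ) ^ (n - i - 2) = q ^ (n - i - 2 - r) * q ^ r := by
      rw [← pow_add]; congr 1; omega
    have hi1 : qInt q (i + 1) = 1 + q * qInt q i := qInt_succ q i
    have hir1 : qInt q (i + (r + 1)) = 1 + q * qInt q (i + r) := by
      rw [show i + (r + 1) = (i + r) + 1 by omega]; exact qInt_succ q (i + r)
    have hir1' : qInt q (i + 1 + r) = 1 + q * qInt q (i + r) := by
      rw [show i + 1 + r = (i + r) + 1 by omega]; exact qInt_succ q (i + r)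
    rw [pow_succ] at ih0 ⊢
    rw [pow_succ] at ih0
    rw [hsp] at ih1 ih0 ⊢
    rw [hi1, hir1'] at ih1
    rw [hir1]
    linear_combination ih1 - q ^ r * ih0

end AuxLemmas4
section MainAux

lemma Talpha_sum (q α : ℝ) (hq : 0 < q) (n k : ℕ) (hn : 2 ≤ n) (hkn : k ≤ n) (x : ℝ)
    (fs gs : ℕ → ℝ)
    (hfs : ∀ i, fs i = (qInt q i / qInt q n) ^ k)
    (hgs : ∀ i, gs i = (1 - q ^ (n - i - 1) * qInt q i / qInt q (n - 1)) * fs i +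
      (q ^ (n - i - 1) * qInt q i / qInt q (n - 1)) * fs (i + 1)) :
    ∑ r ∈ Finset.range (n + 1),
        ((1 - α) * qBinom q (n - 1) r * qDiff q r gs 0 + α * qBinom q n r * qDiff q r fs 0) * x ^ r
      = ∑ r ∈ Finset.range (k + 1), aCoef q α n r k * x ^ r := by
  have hNn : (0 : ℝ) < qInt q n := qInt_pos hq (by omega)
  have hN1 : (0 : ℝ) < qInt q (n - 1) := qInt_pos hq (by omega)
  have hfs' : fs = fun i => ((qInt q n) ^ k)⁻¹ * (qInt q i) ^ k := funext fun i => by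
    rw [hfs i, div_pow]; ring
  have hDf : ∀ m, qDiff q m fs 0
      = ((qInt q n) ^ k)⁻¹ * (q ^ (m * (m - 1) / 2) * qFact q m * qStirling q k m) := by
    intro m
    calc qDiff q m fs 0 = ((qInt q n) ^ k)⁻¹ * qDiff q m (fun i => (qInt q i) ^ k) 0 := by
          rw [hfs']; exact qDiff_smul q _ _ m 0
      _ = _ := by rw [qDiff_monomial hq, Dsum_eq_stirling hq]; ring
  have hg0 : ∀ r, r + 1 ≤ n →
      qInt q (n - 1) * qDiff q r gs 0
        = qInt q (n - 1 + r) * qDiff q r fs 0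
          + q ^ (n - 1 - r) * qInt q r * qDiff q (r + 1) fs 0 := by
    intro r hr
    have h := g_formula hq hn fs gs hgs r 0 (by omega)
    simp only [Nat.sub_zero, qInt_zero, mul_zero, zero_mul, sub_zero, Nat.zero_add,
      zero_add] at h
    have hsucc : qDiff q r fs (0 + 1) = qDiff q (r + 1) fs 0 + q ^ r * qDiff q r fs 0 := by
      rw [qDiff_succ_app]; ring
    rw [hsucc] at h
    have hadd : qInt q (n - 1 + r) = qInt q (n - 1) + q ^ (n - 1) * qInt q r := qInt_add q (n - 1) r
    have hpr : (q : ℝ) ^ (n - 1 - r) * q ^ r = q ^ (n - 1) := by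
      rw [← pow_add]; congr 1; omega
    rw [hadd]
    linear_combination h + (qInt q r * qDiff q r fs 0) * hpr
  have hcoef : ∀ r, r ≤ n →
      (1 - α) * qBinom q (n - 1) r * qDiff q r gs 0 + α * qBinom q n r * qDiff q r fs 0
        = if r ≤ k then aCoef q α n r k else 0 := by
    intro r hr
    rcases le_or_gt r k with hrk | hrk
    · rw [if_pos hrk]
      rcases lt_or_eq_of_le hr with h | h
      · -- main case: r < n
        have hg := hg0 r (by omega)
        have hΔg : qDiff q r gs 0
            = (qInt q (n - 1 + r) * qDiff q r fs 0
                + q ^ (n - 1 - r) * qInt q r * qDiff q (r + 1) fs 0) / qInt q (n - 1) := by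
          rw [eq_div_iff hN1.ne']; linear_combination hg
        rw [hΔg, hDf r, hDf (r + 1)]
        rw [qBinom, if_pos (show r ≤ n - 1 by omega), qBinom, if_pos (show r ≤ n by omega)]
        rw [aCoef, show n + r - 1 = n - 1 + r by omega, stirling_rec hq k r]
        have hF1 : qFact q (n - 1) = qFact q (n - 2) * qInt q (n - 1) := by
          have h2 := qFact_succ q (n - 2); rw [show n - 2 + 1 = n - 1 by omega] at h2; exact h2
        have hFn : qFact q n = qFact q (n - 2) * qInt q (n - 1) * qInt q n := by
          have h2 := qFact_succ q (n - 1); rw [show n - 1 + 1 = n by omega] at h2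
          rw [h2, hF1]
        have hFnr : qFact q (n - r) = qFact q (n - 1 - r) * qInt q (n - r) := by
          have h2 := qFact_succ q (n - 1 - r); rw [show n - 1 - r + 1 = n - r by omega] at h2
          exact h2
        have hFr1 : qFact q (r + 1) = qFact q r * qInt q (r + 1) := qFact_succ q r
        have hT1 : (q : ℝ) ^ ((r + 1) * (r + 1 - 1) / 2) = q ^ (r * (r - 1) / 2) * q ^ r := by
          rw [← pow_add, Nat.triangle_succ]
        have hNr : qInt q (n - 1 + r) = qInt q (n - 1) + q ^ (n - 1) * qInt q r :=
          qInt_add q (n - 1) r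
        have hq1 : (q : ℝ) ^ (n - 1) = q ^ (n - 1 - r) * q ^ r := by
          rw [← pow_add]; congr 1; omega
        rw [hF1, hFn, hFnr, hFr1, hT1, hNr, hq1]
        have nz1 : qFact q (n - 2) ≠ 0 := (qFact_pos hq _).ne'
        have nz2 : qFact q r ≠ 0 := (qFact_pos hq _).ne'
        have nz3 : qFact q (n - 1 - r) ≠ 0 := (qFact_pos hq _).ne'
        have nz4 : qInt q n ≠ 0 := hNn.ne'
        have nz5 : qInt q (n - 1) ≠ 0 := hN1.ne'
        have nz6 : qInt q (n - r) ≠ 0 := (qInt_pos hq (by omega)).ne'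
        have nz7 : (qInt q n) ^ k ≠ 0 := pow_ne_zero _ nz4
        have nz8 : (q : ℝ) ^ (n - 1 - r) ≠ 0 := (pow_pos hq _).ne'
        have nz9 : (q : ℝ) ^ r ≠ 0 := (pow_pos hq _).ne'
        field_simp
        ring
      · -- r = n (hence k = n)
        rw [h]
        rw [qBinom_of_gt (show n - 1 < n by omega), qBinom_self hq, hDf n]
        rw [aCoef, Nat.sub_self, qFact_zero, qInt_zero]
        have hFn : qFact q n = qFact q (n - 2) * qInt q (n - 1) * qInt q n := by
          have hF1 : qFact q (n - 1) = qFact q (n - 2) * qInt q (n - 1) := by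
            have h2 := qFact_succ q (n - 2); rw [show n - 2 + 1 = n - 1 by omega] at h2; exact h2
          have h2 := qFact_succ q (n - 1); rw [show n - 1 + 1 = n by omega] at h2
          rw [h2, hF1]
        rw [hFn]
        have nz7 : (qInt q n) ^ k ≠ 0 := pow_ne_zero _ hNn.ne'
        field_simp
        ring
    · rw [if_neg (by omega)]
      have hS : qStirling q k r = 0 := stirling_vanish hq hrk
      have hS1 : qStirling q k (r + 1) = 0 := stirling_vanish hq (by omega)
      have hf0 : qDiff q r fs 0 = 0 := by rw [hDf r, hS]; ring
      have hf1 : qDiff q (r + 1) fs 0 = 0 := by rw [hDf (r + 1), hS1]; ring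
      rcases lt_or_eq_of_le hr with h | h
      · have hg := hg0 r (by omega)
        rw [hf0, hf1] at hg
        have hz : qInt q (n - 1) * qDiff q r gs 0 = 0 := by rw [hg]; ring
        rcases mul_eq_zero.mp hz with h' | h'
        · exact absurd h' hN1.ne'
        · rw [h', hf0]; ring
      · rw [h, qBinom_of_gt (show n - 1 < n by omega)]
        rw [h] at hf0
        rw [hf0]
        ring
  calc ∑ r ∈ Finset.range (n + 1),
        ((1 - α) * qBinom q (n - 1) r * qDiff q r gs 0 + α * qBinom q n r * qDiff q r fs 0) * x ^ r
      = ∑ r ∈ Finset.range (n + 1), (if r ≤ k then aCoef q α n r k else 0) * x ^ r :=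
        Finset.sum_congr rfl fun r hr => by
          rw [hcoef r (by rw [Finset.mem_range] at hr; omega)]
    _ = ∑ r ∈ Finset.range (k + 1), (if r ≤ k then aCoef q α n r k else 0) * x ^ r :=
        (Finset.sum_subset (Finset.range_subset_range.mpr (by omega)) (fun r hr hr' => by
          rw [Finset.mem_range, not_lt] at hr'
          rw [if_neg (by omega), zero_mul])).symm
    _ = ∑ r ∈ Finset.range (k + 1), aCoef q α n r k * x ^ r :=
        Finset.sum_congr rfl fun r hr => by
          rw [if_pos (by rw [Finset.mem_range] at hr; omega)]

end MainAux

theorem Talpha_monomial (q α : ℝ) (hq : 0 < q) (hα : α ∈ Set.Icc (0 : ℝ) 1)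
    (n k : ℕ) (hn : 2 ≤ n) (hk : 1 ≤ k) (hkn : k ≤ n) (x : ℝ) :
    Talpha q α n (fun t => t ^ k) x = ∑ r ∈ Finset.range (k + 1), aCoef q α n r k * x ^ r := by
  exact Talpha_sum q α hq n k hn hkn x _ _ (fun i => rfl) (fun i => rfl)
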